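/- If x is a stationary state of the combinator dynamics (recombination rate r = 1) with rectangular support, then x is trait independent: x(a) = ∏_d x(a_d) for all a ∈ A with x(a) > 0, i.e., m_x(a) = 1 for all a ∈ supp(x). -/
import Mathlib


open Finset

noncomputable section

variable {D : Type*} [Fintype D] [DecidableEq D] {A : D → Type*}
  [∀ d, Fintype (A d)] [∀ d, DecidableEq (A d)]

/-- payoff of type `a` at state `x`: `u_x(a) = ∑ a', x(a') u(a,a')`. -/
def typePay (u : (∀ d, A d) → (∀ d, A d) → ℝ) (x : (∀ d, A d) → ℝ) (a : ∀ d, A d) : ℝ :=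
  ∑ a', x a' * u a a'

/-- mean payoff `u_x`. -/
def meanPay (u : (∀ d, A d) → (∀ d, A d) → ℝ) (x : (∀ d, A d) → ℝ) : ℝ :=
  ∑ a, x a * typePay u x a

/-- marginal frequency `x(a_d)` of trait `t` in dimension `d`. -/
def marg (x : (∀ d, A d) → ℝ) (d : D) (t : A d) : ℝ :=
  ∑ a, if a d = t then x a else 0

/-- marginal trait payoff `u_x(a_d)` (0 by div-by-zero convention when `x(a_d)=0`). -/
def traitPay (u : (∀ d, A d) → (∀ d, A d) → ℝ) (x : (∀ d, A d) → ℝ) (d : D) (t : A d) : ℝ :=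
  (∑ a, if a d = t then x a * typePay u x a else 0) / marg x d t

/-- the recombinator vector field `ẋ(a)` with recombination rate `r`. -/
def recomb (u : (∀ d, A d) → (∀ d, A d) → ℝ) (x : (∀ d, A d) → ℝ) (r : ℝ) (a : ∀ d, A d) : ℝ :=
  (1 - r) * x a * typePay u x a / meanPay u x
    + r * ∏ d, (marg x d (a d) * traitPay u x d (a d) / meanPay u x)
    - x a

/-- the trait-to-type ratio `m_x(a)`. -/
def ttRatio (x : (∀ d, A d) → ℝ) (a : ∀ d, A d) : ℝ :=
  (∏ d, marg x d (a d)) / x a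

/-- the `r`-payoff `z^r_x(a)`. -/
def rPay (u : (∀ d, A d) → (∀ d, A d) → ℝ) (x : (∀ d, A d) → ℝ) (r : ℝ) (a : ∀ d, A d) : ℝ :=
  (1 - r) * typePay u x a / meanPay u x
    + r * ttRatio x a * ∏ d, (traitPay u x d (a d) / meanPay u x)

lemma aux_sum_ite_prod (g : ∀ d, A d → ℝ) (hg : ∀ e, ∑ s, g e s = 1)
    (d : D) (t : A d) :
    ∑ a : ∀ d, A d, (if a d = t then ∏ e, g e (a e) else 0) = g d t := by
  classical
  set g' : ∀ e, A e → ℝ := Function.update g d (fun s => if s = t then g d s else 0) with hg'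
  have hterm : ∀ a : ∀ d, A d,
      (if a d = t then ∏ e, g e (a e) else 0) = ∏ e, g' e (a e) := by
    intro a
    by_cases h : a d = t
    · rw [if_pos h]
      refine Finset.prod_congr rfl fun e _ => ?_
      rcases eq_or_ne e d with rfl | hne
      · simp [hg', Function.update_self, h]
      · simp [hg', Function.update_of_ne hne]
    · rw [if_neg h]
      symm
      apply Finset.prod_eq_zero (Finset.mem_univ d)
      simp [hg', Function.update_self, h]
  calc ∑ a : ∀ d, A d, (if a d = t then ∏ e, g e (a e) else 0)
      = ∑ a : ∀ d, A d, ∏ e, g' e (a e) := Finset.sum_congr rfl fun a _ => hterm a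
    _ = ∏ e, ∑ s, g' e s := by
        rw [Finset.prod_univ_sum, Fintype.piFinset_univ]
    _ = g d t := by
        rw [Finset.prod_eq_single d]
        · simp [hg', Function.update_self]
        · intro e _ hne
          simp [hg', Function.update_of_ne hne, hg e]
        · simp


/-- a stationary state of the combinator dynamics (`r = 1`) with
rectangular support is trait independent. -/
theorem combinator_stationary_trait_independent
    (u : (∀ d, A d) → (∀ d, A d) → ℝ) (hu : ∀ a a', 0 < u a a')
    (x : (∀ d, A d) → ℝ) (hx : ∀ a, 0 ≤ x a) (hsum : ∑ a, x a = 1)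
    (hrect : ∀ a, 0 < x a ↔ ∀ d, 0 < marg x d (a d))
    (hstat : ∀ a, recomb u x 1 a = 0) :
    ∀ a, 0 < x a → x a = ∏ d, marg x d (a d) := by
  classical
  have htp : ∀ a, 0 ≤ typePay u x a := fun a =>
    Finset.sum_nonneg fun a' _ => mul_nonneg (hx a') (hu a a').le
  have hWpos : 0 < meanPay u x := by
    obtain ⟨a0, ha0⟩ : ∃ a0, 0 < x a0 := by
      by_contra h
      push_neg at h
      have hz : ∀ a, x a = 0 := fun a => le_antisymm (h a) (hx a)
      simp [hz] at hsum
    have h1 : x a0 * u a0 a0 ≤ typePay u x a0 :=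
      Finset.single_le_sum (f := fun a' => x a' * u a0 a')
        (fun i _ => mul_nonneg (hx i) (hu a0 i).le) (Finset.mem_univ a0)
    have h2 : 0 < typePay u x a0 := lt_of_lt_of_le (mul_pos ha0 (hu a0 a0)) h1
    have h3 : x a0 * typePay u x a0 ≤ meanPay u x :=
      Finset.single_le_sum (f := fun a => x a * typePay u x a)
        (fun i _ => mul_nonneg (hx i) (htp i)) (Finset.mem_univ a0)
    exact lt_of_lt_of_le (mul_pos ha0 h2) h3
  have hmt : ∀ d (t : A d), marg x d t * traitPay u x d t
      = ∑ a, if a d = t then x a * typePay u x a else 0 := by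
    intro d t
    by_cases hm : marg x d t = 0
    · have hz : ∀ a : ∀ d, A d, a d = t → x a = 0 := by
        intro a hat
        have h0 := (Finset.sum_eq_zero_iff_of_nonneg
          (fun b _ => by split_ifs with hb; exacts [hx b, le_rfl])).mp hm a (Finset.mem_univ a)
        simpa [hat] using h0
      rw [hm, zero_mul]
      symm
      apply Finset.sum_eq_zero
      intro a _
      split_ifs with h
      · rw [hz a h, zero_mul]
      · rfl
    · rw [traitPay, mul_comm, div_mul_cancel₀ _ hm]
  have hsumW : ∀ d, ∑ t, marg x d t * traitPay u x d t = meanPay u x := by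
    intro d
    calc ∑ t, marg x d t * traitPay u x d t
        = ∑ t, ∑ a, if a d = t then x a * typePay u x a else 0 :=
          Finset.sum_congr rfl fun t _ => hmt d t
      _ = ∑ a, ∑ t, if a d = t then x a * typePay u x a else 0 := Finset.sum_comm
      _ = ∑ a, x a * typePay u x a := by
          refine Finset.sum_congr rfl fun a _ => ?_
          simp
      _ = meanPay u x := rfl
  set g : ∀ d, A d → ℝ := fun d t => marg x d t * traitPay u x d t / meanPay u x with hgdef
  have hg1 : ∀ d, ∑ t, g d t = 1 := by
    intro d
    rw [hgdef]
    rw [← Finset.sum_div, hsumW d, div_self hWpos.ne']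
  have hxeq : ∀ a, x a = ∏ d, g d (a d) := by
    intro a
    have h := hstat a
    simp only [recomb, sub_self, zero_mul, zero_div, one_mul, zero_add] at h
    linarith [h]
  have hmarg : ∀ d (t : A d), marg x d t = g d t := by
    intro d t
    have h1 : marg x d t = ∑ a : ∀ d, A d, (if a d = t then ∏ e, g e (a e) else 0) := by
      rw [marg]
      refine Finset.sum_congr rfl fun a _ => ?_
      split_ifs with h
      · exact hxeq a
      · rfl
    rw [h1, aux_sum_ite_prod g hg1 d t]
  intro a _
  rw [hxeq a]
  exact Finset.prod_congr rfl fun d _ => (hmarg d (a d)).symm
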